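/- Given finite sets V_1, ..., V_ℓ each of cardinality at least 2ℓ, there exist pairwise disjoint sets 𝒱_1, ..., 𝒱_ℓ with 𝒱_l ⊆ V_l and |𝒱_l| ≥ |V_l|/(2ℓ) for every l ∈ [ℓ]. -/
import Mathlib

lemma greedy_distribute {U : Type*} [DecidableEq U] :
    ∀ (n : ℕ) (A : Fin n → Finset U) (m : Fin n → ℕ),
    (∀ j : Fin n, (∑ k : Fin n, if k ≤ j then m k else 0) ≤ (A j).card) →
    ∃ W : Fin n → Finset U,
      (∀ i j : Fin n, i ≠ j → Disjoint (W i) (W j)) ∧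
      (∀ j, W j ⊆ A j) ∧ (∀ j, (W j).card = m j) := by
  intro n
  induction n with
  | zero => exact fun A m _ => ⟨fun i => ∅, fun i => i.elim0, fun i => i.elim0, fun i => i.elim0⟩
  | succ n ih =>
    intro A m h
    have h0 : m 0 ≤ (A 0).card := by
      have := h 0
      simpa [Fin.le_zero_iff] using this
    obtain ⟨W0, hW0sub, hW0card⟩ := Finset.exists_subset_card_eq h0
    set A' : Fin n → Finset U := fun i => A i.succ \ W0 with hA'
    have hcond : ∀ j : Fin n,
        (∑ k : Fin n, if k ≤ j then m k.succ else 0) ≤ (A' j).card := by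
      intro j
      have key : m 0 + ∑ k : Fin n, (if k ≤ j then m k.succ else 0) ≤ (A j.succ).card := by
        have := h j.succ
        rw [Fin.sum_univ_succ] at this
        simpa [Fin.succ_le_succ_iff, Fin.zero_le] using this
      have hsd : (A j.succ).card - W0.card ≤ (A' j).card := Finset.le_card_sdiff _ _
      omega
    obtain ⟨W', hdisj, hsub, hcard⟩ := ih A' (fun k => m k.succ) hcond
    refine ⟨Fin.cases W0 W', ?_, ?_, ?_⟩
    · intro i j hij
      induction i using Fin.cases with
      | zero =>
        induction j using Fin.cases with
        | zero => exact absurd rfl hij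
        | succ j =>
          simp only [Fin.cases_zero, Fin.cases_succ]
          exact (Finset.sdiff_disjoint.mono_left (hsub j)).symm
      | succ i =>
        induction j using Fin.cases with
        | zero =>
          simp only [Fin.cases_zero, Fin.cases_succ]
          exact Finset.sdiff_disjoint.mono_left (hsub i)
        | succ j =>
          simp only [Fin.cases_succ]
          exact hdisj i j (fun e => hij (by rw [e]))
    · intro j
      induction j using Fin.cases with
      | zero => simpa using hW0sub
      | succ j =>
        simp only [Fin.cases_succ]
        exact (hsub j).trans (Finset.sdiff_subset)
    · intro j
      induction j using Fin.cases with
      | zero => simpa using hW0card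
      | succ j => simpa using hcard j

/-- Distribute: given sets `V₁,…,V_ℓ` each of size at least `2ℓ`, there are pairwise
disjoint `𝒱_l ⊆ V_l` with `|𝒱_l| ≥ |V_l|/(2ℓ)`. -/
theorem stmt_15 {U : Type*} [DecidableEq U] [Fintype U]
    (ℓ : ℕ) (hℓ : 0 < ℓ) (V : Fin ℓ → Finset U)
    (hV : ∀ l : Fin ℓ, 2 * ℓ ≤ (V l).card) :
    ∃ W : Fin ℓ → Finset U,
      (∀ l₁ l₂ : Fin ℓ, l₁ ≠ l₂ → Disjoint (W l₁) (W l₂)) ∧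
      (∀ l : Fin ℓ, W l ⊆ V l) ∧
      (∀ l : Fin ℓ, ((V l).card : ℝ) / (2 * (ℓ : ℝ)) ≤ ((W l).card : ℝ)) := by
  set σ := Tuple.sort (fun i => (V i).card) with hσ
  have hmono : Monotone ((fun i => (V i).card) ∘ σ) := Tuple.monotone_sort _
  set A : Fin ℓ → Finset U := fun j => V (σ j) with hA
  set m : Fin ℓ → ℕ := fun j => ((A j).card + (2 * ℓ - 1)) / (2 * ℓ) with hm
  have hℓ2 : 0 < 2 * ℓ := by omega
  have hmval : ∀ j, (A j).card ≤ 2 * ℓ * m j ∧ ℓ * m j ≤ (A j).card := by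
    intro j
    have hc : 2 * ℓ ≤ (A j).card := hV (σ j)
    have h1 := Nat.div_add_mod ((A j).card + (2 * ℓ - 1)) (2 * ℓ)
    have h2 := Nat.mod_lt ((A j).card + (2 * ℓ - 1)) hℓ2
    have e : 2 * ℓ * (((A j).card + (2 * ℓ - 1)) / (2 * ℓ)) =
        ℓ * (((A j).card + (2 * ℓ - 1)) / (2 * ℓ)) +
        ℓ * (((A j).card + (2 * ℓ - 1)) / (2 * ℓ)) := by ring
    simp only [hm]
    omega
  have hcond : ∀ j : Fin ℓ, (∑ k : Fin ℓ, if k ≤ j then m k else 0) ≤ (A j).card := by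
    intro j
    have hstep : ∀ k : Fin ℓ, (if k ≤ j then m k else 0) ≤ m j := by
      intro k
      split
      · exact Nat.div_le_div_right (Nat.add_le_add_right (hmono (by assumption)) _)
      · exact Nat.zero_le _
    calc (∑ k : Fin ℓ, if k ≤ j then m k else 0) ≤ ∑ _k : Fin ℓ, m j :=
          Finset.sum_le_sum (fun k _ => hstep k)
      _ = ℓ * m j := by simp [Finset.sum_const, mul_comm]
      _ ≤ (A j).card := (hmval j).2
  obtain ⟨W', hdisj, hsub, hcard⟩ := greedy_distribute ℓ A m hcond
  refine ⟨fun l => W' (σ.symm l), ?_, ?_, ?_⟩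
  · intro l₁ l₂ hne
    exact hdisj _ _ (fun e => hne (by simpa using congrArg σ e))
  · intro l
    have := hsub (σ.symm l)
    simpa [hA] using this
  · intro l
    have hc := hcard (σ.symm l)
    have hAeq : A (σ.symm l) = V l := by simp [hA]
    have hle : (V l).card ≤ 2 * ℓ * m (σ.symm l) := by
      have := (hmval (σ.symm l)).1
      rwa [hAeq] at this
    rw [hc, div_le_iff₀ (by positivity)]
    rw [mul_comm]
    calc ((V l).card : ℝ) ≤ ((2 * ℓ * m (σ.symm l) : ℕ) : ℝ) := by exact_mod_cast hle
      _ = 2 * (ℓ : ℝ) * (m (σ.symm l) : ℝ) := by push_cast; ring
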